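/- Let ℓ be a prime and m, n ≥ 0 integers. Let u = (diag(ℓ^{a₁}, ℓ^{a₂}, ℓ^{a₃}, ℓ^{a₄}), diag(ℓ^{b₁}, ℓ^{b₂})) ∈ G(ℚ_ℓ), where a₁ ≥ a₂ ≥ a₃ ≥ a₄ ≥ 0 and b₁, b₂ ≥ 0 are integers with a₁ + a₄ = a₂ + a₃ = b₁ + b₂. Then the canonical map from the set of left K_{m,n}-cosets contained in K_{m,n} · u · K_{m,n} to the set of left G(ℤ_ℓ)-cosets contained in K_{m,n} · u · G(ℤ_ℓ), sending g·K_{m,n} to g·G(ℤ_ℓ), is a bijection; in particular, for k₁, k₂ ∈ K_{m,n}, one has k₁·u·G(ℤ_ℓ) = k₂·u·G(ℤ_ℓ) if and only if k₁·u·K_{m,n} = k₂·u·K_{m,n}. -/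
import Mathlib


open Pointwise

noncomputable section

/-- The ambient ring containing `G(ℚ_ℓ) = (GSp₄ ×_{GL₁} GL₂)(ℚ_ℓ)`:
pairs of a 4×4 and a 2×2 matrix over `ℚ_ℓ`. -/
abbrev MG (p : ℕ) [Fact p.Prime] :=
  Matrix (Fin 4) (Fin 4) ℚ_[p] × Matrix (Fin 2) (Fin 2) ℚ_[p]

/-- The standard skew-symmetric matrix `J` defining `GSp₄`. -/
def Jmat (p : ℕ) [Fact p.Prime] : Matrix (Fin 4) (Fin 4) ℚ_[p] :=
  !![0, 0, 0, 1; 0, 0, 1, 0; 0, -1, 0, 0; -1, 0, 0, 0]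

/-- `G(ℤ_ℓ)`: pairs `(g, h)` with `g ∈ GSp₄(ℤ_ℓ)`, `h ∈ GL₂(ℤ_ℓ)` and
`μ(g) = det h`. -/
def GZ (p : ℕ) [Fact p.Prime] : Set (MG p) :=
  {x | (∀ i j, ‖x.1 i j‖ ≤ 1) ∧ (∀ i j, ‖x.2 i j‖ ≤ 1) ∧
    ‖x.1.det‖ = 1 ∧ ‖x.2.det‖ = 1 ∧
    x.1.transpose * Jmat p * x.1 = x.2.det • Jmat p}

/-- The subgroup `K_{m,n}` of `G(ℤ_ℓ)`: pairs `(g, h)` with `μ(g) ≡ 1 (mod ℓ^m)` and the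
entries of `g` at positions (2,1), (3,1), (4,1), (4,2), (4,3) divisible by `ℓⁿ`. -/
def Kmn (p : ℕ) [Fact p.Prime] (m n : ℕ) : Set (MG p) :=
  {x ∈ GZ p | ‖x.2.det - 1‖ ≤ (p : ℝ) ^ (-(m : ℤ)) ∧
    ‖x.1 1 0‖ ≤ (p : ℝ) ^ (-(n : ℤ)) ∧ ‖x.1 2 0‖ ≤ (p : ℝ) ^ (-(n : ℤ)) ∧
    ‖x.1 3 0‖ ≤ (p : ℝ) ^ (-(n : ℤ)) ∧ ‖x.1 3 1‖ ≤ (p : ℝ) ^ (-(n : ℤ)) ∧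
    ‖x.1 3 2‖ ≤ (p : ℝ) ^ (-(n : ℤ))}

/-- The element `u = (diag(ℓ^{a₁}, ℓ^{a₂}, ℓ^{a₃}, ℓ^{a₄}), diag(ℓ^{b₁}, ℓ^{b₂}))`. -/
def uElt (p : ℕ) [Fact p.Prime] (a₁ a₂ a₃ a₄ b₁ b₂ : ℕ) : MG p :=
  (Matrix.diagonal ![(p : ℚ_[p]) ^ a₁, (p : ℚ_[p]) ^ a₂, (p : ℚ_[p]) ^ a₃,
      (p : ℚ_[p]) ^ a₄],
    Matrix.diagonal ![(p : ℚ_[p]) ^ b₁, (p : ℚ_[p]) ^ b₂])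


lemma norm_sum_le' {p : ℕ} [Fact p.Prime] {ι : Type*} (s : Finset ι) (f : ι → ℚ_[p])
    (c : ℝ) (hc : 0 ≤ c) (h : ∀ i ∈ s, ‖f i‖ ≤ c) : ‖∑ i ∈ s, f i‖ ≤ c := by
  classical
  induction s using Finset.cons_induction with
  | empty => simpa using hc
  | cons a s ha ih =>
    rw [Finset.sum_cons]
    refine le_trans (Padic.nonarchimedean _ _) (max_le (h a (by simp)) ?_)
    exact ih fun i hi => h i (Finset.mem_cons_of_mem hi)

lemma norm_det_le_one {p : ℕ} [Fact p.Prime] {k : ℕ} (A : Matrix (Fin k) (Fin k) ℚ_[p])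
    (h : ∀ i j, ‖A i j‖ ≤ 1) : ‖A.det‖ ≤ 1 := by
  rw [Matrix.det_apply]
  apply norm_sum_le' _ _ _ zero_le_one
  intro σ _
  have hp : ‖∏ i, A (σ i) i‖ ≤ 1 := by
    rw [norm_prod]; exact Finset.prod_le_one (fun i _ => norm_nonneg _) (fun i _ => h _ _)
  rcases Int.units_eq_one_or (Equiv.Perm.sign σ) with hs | hs <;> rw [hs] <;>
    simpa [Units.smul_def] using hp

lemma norm_inv_entries {p : ℕ} [Fact p.Prime] {k : ℕ} (A : Matrix (Fin k) (Fin k) ℚ_[p])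
    (h : ∀ i j, ‖A i j‖ ≤ 1) (hd : ‖A.det‖ = 1) : ∀ i j, ‖A⁻¹ i j‖ ≤ 1 := by
  intro i j
  rw [Matrix.inv_def, Matrix.smul_apply]
  have hd0 : A.det ≠ 0 := by intro h0; rw [h0] at hd; simp at hd
  rw [Ring.inverse_eq_inv', smul_eq_mul, norm_mul, norm_inv, hd, inv_one, one_mul]
  rw [Matrix.adjugate_apply]
  apply norm_det_le_one
  intro a b
  by_cases hab : a = j
  · subst hab; simp only [Matrix.updateRow_self]
    by_cases hbi : b = i <;> simp [Pi.single_apply, hbi]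
  · rw [Matrix.updateRow_ne hab]; exact h a b

variable {p : ℕ} [Fact p.Prime]

lemma one_mem_GZ : (1 : MG p) ∈ GZ p := by
  refine ⟨?_, ?_, by simp, by simp, by simp⟩ <;>
  · intro i j
    rcases eq_or_ne i j with h | h <;> simp [Matrix.one_apply, h]

lemma mul_mem_GZ {x y : MG p} (hx : x ∈ GZ p) (hy : y ∈ GZ p) : x * y ∈ GZ p := by
  obtain ⟨hx1, hx2, hxd1, hxd2, hxJ⟩ := hx
  obtain ⟨hy1, hy2, hyd1, hyd2, hyJ⟩ := hy
  refine ⟨?_, ?_, ?_, ?_, ?_⟩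
  · intro i j
    show ‖(x.1 * y.1) i j‖ ≤ 1
    rw [Matrix.mul_apply]
    apply norm_sum_le' _ _ _ zero_le_one
    intro k _
    rw [norm_mul]
    exact mul_le_one₀ (hx1 i k) (norm_nonneg _) (hy1 k j)
  · intro i j
    show ‖(x.2 * y.2) i j‖ ≤ 1
    rw [Matrix.mul_apply]
    apply norm_sum_le' _ _ _ zero_le_one
    intro k _
    rw [norm_mul]
    exact mul_le_one₀ (hx2 i k) (norm_nonneg _) (hy2 k j)
  · show ‖(x.1 * y.1).det‖ = 1
    rw [Matrix.det_mul, norm_mul, hxd1, hyd1, mul_one]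
  · show ‖(x.2 * y.2).det‖ = 1
    rw [Matrix.det_mul, norm_mul, hxd2, hyd2, mul_one]
  · show (x.1 * y.1).transpose * Jmat p * (x.1 * y.1) = (x.2 * y.2).det • Jmat p
    rw [Matrix.transpose_mul, Matrix.det_mul, mul_smul]
    calc y.1.transpose * x.1.transpose * Jmat p * (x.1 * y.1) = y.1.transpose * (x.1.transpose * Jmat p * x.1) * y.1 := by
          simp only [Matrix.mul_assoc]
      _ = y.1.transpose * (x.2.det • Jmat p) * y.1 := by rw [hxJ]
      _ = x.2.det • (y.1.transpose * Jmat p * y.1) := by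
          rw [Matrix.mul_smul, Matrix.smul_mul]
      _ = x.2.det • y.2.det • Jmat p := by rw [hyJ]

lemma det_ne_zero_of_norm_one {k : ℕ} {A : Matrix (Fin k) (Fin k) ℚ_[p]} (h : ‖A.det‖ = 1) :
    A.det ≠ 0 := by intro h0; rw [h0] at h; simp at h

lemma inv_mem_GZ {x : MG p} (hx : x ∈ GZ p) :
    (x.1⁻¹, x.2⁻¹) ∈ GZ p ∧ x * (x.1⁻¹, x.2⁻¹) = 1 ∧ (x.1⁻¹, x.2⁻¹) * x = 1 := by
  obtain ⟨hx1, hx2, hxd1, hxd2, hxJ⟩ := hx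
  have hd1 : IsUnit x.1.det := isUnit_iff_ne_zero.2 (det_ne_zero_of_norm_one hxd1)
  have hd2 : IsUnit x.2.det := isUnit_iff_ne_zero.2 (det_ne_zero_of_norm_one hxd2)
  have hinv1 : x.1 * x.1⁻¹ = 1 := Matrix.mul_nonsing_inv _ hd1
  have hinv1' : x.1⁻¹ * x.1 = 1 := Matrix.nonsing_inv_mul _ hd1
  have hinv2 : x.2 * x.2⁻¹ = 1 := Matrix.mul_nonsing_inv _ hd2
  have hinv2' : x.2⁻¹ * x.2 = 1 := Matrix.nonsing_inv_mul _ hd2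
  have hdet1 : (x.1⁻¹).det = x.1.det⁻¹ := by
    rw [Matrix.det_nonsing_inv, Ring.inverse_eq_inv']
  have hdet2 : (x.2⁻¹).det = x.2.det⁻¹ := by
    rw [Matrix.det_nonsing_inv, Ring.inverse_eq_inv']
  refine ⟨⟨norm_inv_entries _ hx1 hxd1, norm_inv_entries _ hx2 hxd2, ?_, ?_, ?_⟩, ?_, ?_⟩
  · rw [hdet1, norm_inv, hxd1, inv_one]
  · rw [hdet2, norm_inv, hxd2, inv_one]
  · -- symplectic condition for inverse
    have hmu : x.2.det ≠ 0 := det_ne_zero_of_norm_one hxd2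
    have key : x.2.det • ((x.1⁻¹).transpose * Jmat p * x.1⁻¹) = Jmat p := by
      symm
      calc Jmat p = (x.1 * x.1⁻¹).transpose * Jmat p * (x.1 * x.1⁻¹) := by
            rw [hinv1]; simp
        _ = (x.1⁻¹).transpose * (x.1.transpose * Jmat p * x.1) * x.1⁻¹ := by
            rw [Matrix.transpose_mul]; simp only [Matrix.mul_assoc]
        _ = (x.1⁻¹).transpose * (x.2.det • Jmat p) * x.1⁻¹ := by rw [hxJ]
        _ = x.2.det • ((x.1⁻¹).transpose * Jmat p * x.1⁻¹) := by
            rw [Matrix.mul_smul, Matrix.smul_mul]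
    show x.1⁻¹.transpose * Jmat p * x.1⁻¹ = (x.2⁻¹).det • Jmat p
    rw [hdet2, eq_comm, inv_smul_eq_iff₀ hmu]
    exact key.symm
  · exact Prod.ext hinv1 hinv2
  · exact Prod.ext hinv1' hinv2'

lemma pn_pos (q k : ℕ) [Fact q.Prime] : (0:ℝ) < (q:ℝ) ^ (-(k:ℤ)) := by
  apply zpow_pos
  exact_mod_cast (Fact.out : q.Prime).pos

lemma mul_norm_le_l {a b : ℚ_[p]} {c : ℝ} (ha : ‖a‖ ≤ c) (hb : ‖b‖ ≤ 1) : ‖a * b‖ ≤ c := by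
  rw [norm_mul]
  calc ‖a‖ * ‖b‖ ≤ c * 1 := mul_le_mul ha hb (norm_nonneg _) ((norm_nonneg a).trans ha)
    _ = c := mul_one c

lemma mul_norm_le_r {a b : ℚ_[p]} {c : ℝ} (ha : ‖a‖ ≤ 1) (hb : ‖b‖ ≤ c) : ‖a * b‖ ≤ c := by
  rw [mul_comm]; exact mul_norm_le_l hb ha

lemma Kmn_subset_GZ (m n : ℕ) : Kmn p m n ⊆ GZ p := fun x hx => hx.1

lemma one_mem_Kmn (m n : ℕ) : (1 : MG p) ∈ Kmn p m n := by
  refine ⟨one_mem_GZ, ?_, ?_, ?_, ?_, ?_, ?_⟩ <;>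
    simp [Matrix.one_apply, le_of_lt (pn_pos p m), le_of_lt (pn_pos p n)]

lemma mul_mem_Kmn {m n : ℕ} {x y : MG p} (hx : x ∈ Kmn p m n) (hy : y ∈ Kmn p m n) :
    x * y ∈ Kmn p m n := by
  obtain ⟨hxG, hxm, hx10, hx20, hx30, hx31, hx32⟩ := hx
  obtain ⟨hyG, hym, hy10, hy20, hy30, hy31, hy32⟩ := hy
  have hx1 := hxG.1
  have hy1 := hyG.1
  refine ⟨mul_mem_GZ hxG hyG, ?_, ?_, ?_, ?_, ?_, ?_⟩
  · show ‖(x.2 * y.2).det - 1‖ ≤ _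
    rw [Matrix.det_mul]
    have : x.2.det * y.2.det - 1 = x.2.det * (y.2.det - 1) + (x.2.det - 1) := by ring
    rw [this]
    refine le_trans (Padic.nonarchimedean _ _) (max_le ?_ hxm)
    exact mul_norm_le_r (le_of_eq hxG.2.2.2.1) hym
  all_goals {
    show ‖(x.1 * y.1) _ _‖ ≤ _
    rw [Matrix.mul_apply]
    apply norm_sum_le' _ _ _ (le_of_lt (pn_pos p n))
    intro k _
    fin_cases k <;>
      first
        | exact mul_norm_le_l hx10 (hy1 _ _) | exact mul_norm_le_l hx20 (hy1 _ _)
        | exact mul_norm_le_l hx30 (hy1 _ _) | exact mul_norm_le_l hx31 (hy1 _ _)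
        | exact mul_norm_le_l hx32 (hy1 _ _)
        | exact mul_norm_le_r (hx1 _ _) hy10 | exact mul_norm_le_r (hx1 _ _) hy20
        | exact mul_norm_le_r (hx1 _ _) hy30 | exact mul_norm_le_r (hx1 _ _) hy31
        | exact mul_norm_le_r (hx1 _ _) hy32 }

lemma Jmat_sq : Jmat p * Jmat p = -1 := by
  ext i j
  fin_cases i <;> fin_cases j <;>
    simp [Jmat, Matrix.mul_apply, Fin.sum_univ_four, Matrix.one_apply, Matrix.vecHead,
      Matrix.vecTail]

lemma JAJ (A : Matrix (Fin 4) (Fin 4) ℚ_[p]) :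
    (Jmat p * A.transpose * Jmat p) 1 0 = -(A 3 2) ∧
    (Jmat p * A.transpose * Jmat p) 2 0 = A 3 1 ∧
    (Jmat p * A.transpose * Jmat p) 3 0 = A 3 0 ∧
    (Jmat p * A.transpose * Jmat p) 3 1 = A 2 0 ∧
    (Jmat p * A.transpose * Jmat p) 3 2 = -(A 1 0) := by
  refine ⟨?_, ?_, ?_, ?_, ?_⟩ <;>
    simp [Jmat, Matrix.mul_apply, Fin.sum_univ_four, Matrix.vecMul, dotProduct,
      Matrix.vecHead, Matrix.vecTail]

lemma inv1_formula {x : MG p} (hx : x ∈ GZ p) :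
    x.1⁻¹ = (-(x.2.det)⁻¹) • (Jmat p * x.1.transpose * Jmat p) := by
  obtain ⟨hx1, hx2, hxd1, hxd2, hxJ⟩ := hx
  have hmu : x.2.det ≠ 0 := det_ne_zero_of_norm_one hxd2
  apply Matrix.inv_eq_left_inv
  have h2 : (Jmat p * x.1.transpose * Jmat p) * x.1 = (-x.2.det) • 1 := by
    have ha : (Jmat p * x.1.transpose * Jmat p) * x.1
        = Jmat p * (x.1.transpose * Jmat p * x.1) := by simp only [Matrix.mul_assoc]
    rw [ha, hxJ, Matrix.mul_smul, Jmat_sq, smul_neg, neg_smul, ← neg_smul]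
  rw [Matrix.smul_mul, h2, smul_smul, neg_mul_neg, inv_mul_cancel₀ hmu, one_smul]

lemma inv_mem_Kmn {m n : ℕ} {x : MG p} (hx : x ∈ Kmn p m n) :
    (x.1⁻¹, x.2⁻¹) ∈ Kmn p m n := by
  obtain ⟨hxG, hxm, hx10, hx20, hx30, hx31, hx32⟩ := hx
  obtain ⟨hGZ, -, -⟩ := inv_mem_GZ hxG
  have hmu : x.2.det ≠ 0 := det_ne_zero_of_norm_one hxG.2.2.2.1
  have hnmu : ‖(x.2.det)⁻¹‖ = 1 := by rw [norm_inv, hxG.2.2.2.1, inv_one]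
  have hdet2 : (x.2⁻¹).det = x.2.det⁻¹ := by
    rw [Matrix.det_nonsing_inv, Ring.inverse_eq_inv']
  have hform := inv1_formula hxG
  obtain ⟨e1, e2, e3, e4, e5⟩ := JAJ (p := p) x.1
  refine ⟨hGZ, ?_, ?_, ?_, ?_, ?_, ?_⟩
  · show ‖(x.2⁻¹).det - 1‖ ≤ _
    rw [hdet2]
    have : x.2.det⁻¹ - 1 = (1 - x.2.det) * x.2.det⁻¹ := by field_simp
    rw [this, norm_mul, hnmu, mul_one, ← norm_neg, neg_sub]
    exact hxm
  · show ‖x.1⁻¹ 1 0‖ ≤ _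
    rw [hform, Matrix.smul_apply, e1, smul_eq_mul, norm_mul, norm_neg, hnmu, one_mul, norm_neg]
    exact hx32
  · show ‖x.1⁻¹ 2 0‖ ≤ _
    rw [hform, Matrix.smul_apply, e2, smul_eq_mul, norm_mul, norm_neg, hnmu, one_mul]
    exact hx31
  · show ‖x.1⁻¹ 3 0‖ ≤ _
    rw [hform, Matrix.smul_apply, e3, smul_eq_mul, norm_mul, norm_neg, hnmu, one_mul]
    exact hx30
  · show ‖x.1⁻¹ 3 1‖ ≤ _
    rw [hform, Matrix.smul_apply, e4, smul_eq_mul, norm_mul, norm_neg, hnmu, one_mul]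
    exact hx20
  · show ‖x.1⁻¹ 3 2‖ ≤ _
    rw [hform, Matrix.smul_apply, e5, smul_eq_mul, norm_mul, norm_neg, hnmu, one_mul, norm_neg]
    exact hx10

lemma p_ne_zero : ((p : ℚ_[p])) ≠ 0 := by
  exact_mod_cast (Fact.out : p.Prime).ne_zero

lemma norm_p_pow_le_one (k : ℕ) : ‖((p : ℚ_[p])) ^ k‖ ≤ 1 := by
  rw [norm_pow]
  apply pow_le_one₀ (norm_nonneg _)
  rw [Padic.norm_p]
  apply inv_le_one_of_one_le₀
  exact_mod_cast (Fact.out : p.Prime).one_lt.le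

lemma inv_pair_Kmn {m n : ℕ} {x : MG p} (hx : x ∈ Kmn p m n) :
    ∃ y ∈ Kmn p m n, x * y = 1 ∧ y * x = 1 := by
  obtain ⟨-, h1, h2⟩ := inv_mem_GZ (hx.1)
  exact ⟨(x.1⁻¹, x.2⁻¹), inv_mem_Kmn hx, h1, h2⟩

lemma inv_pair_GZ {x : MG p} (hx : x ∈ GZ p) :
    ∃ y ∈ GZ p, x * y = 1 ∧ y * x = 1 := by
  obtain ⟨h0, h1, h2⟩ := inv_mem_GZ hx
  exact ⟨(x.1⁻¹, x.2⁻¹), h0, h1, h2⟩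

lemma entry_key {r c : ℕ} (hrc : r ≤ c) {x y : ℚ_[p]} (h : (p:ℚ_[p])^r * y = x * (p:ℚ_[p])^c)
    {t : ℝ} (hx : ‖x‖ ≤ t) : ‖y‖ ≤ t := by
  have hy : y = x * (p:ℚ_[p])^(c - r) := by
    apply mul_left_cancel₀ (pow_ne_zero r (p_ne_zero (p := p)))
    rw [h, ← mul_assoc, mul_comm ((p:ℚ_[p])^r) x, mul_assoc, ← pow_add]
    congr 2
    omega
  rw [hy, norm_mul]
  calc ‖x‖ * ‖(p:ℚ_[p])^(c-r)‖ ≤ t * 1 :=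
        mul_le_mul hx (norm_p_pow_le_one _) (norm_nonneg _) ((norm_nonneg x).trans hx)
    _ = t := mul_one t

lemma key_conj {m n a₁ a₂ a₃ a₄ b₁ b₂ : ℕ}
    (h12 : a₂ ≤ a₁) (h23 : a₃ ≤ a₂) (h34 : a₄ ≤ a₃)
    {k s : MG p} (hk : k ∈ Kmn p m n) (hs : s ∈ GZ p)
    (h : uElt p a₁ a₂ a₃ a₄ b₁ b₂ * s = k * uElt p a₁ a₂ a₃ a₄ b₁ b₂) :
    s ∈ Kmn p m n := by
  obtain ⟨hkG, hkm, hk10, hk20, hk30, hk31, hk32⟩ := hk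
  have h1 : (uElt p a₁ a₂ a₃ a₄ b₁ b₂).1 * s.1 = k.1 * (uElt p a₁ a₂ a₃ a₄ b₁ b₂).1 :=
    congrArg Prod.fst h
  have h2 : (uElt p a₁ a₂ a₃ a₄ b₁ b₂).2 * s.2 = k.2 * (uElt p a₁ a₂ a₃ a₄ b₁ b₂).2 :=
    congrArg Prod.snd h
  have hdet : s.2.det = k.2.det := by
    have hd := congrArg Matrix.det h2
    rw [Matrix.det_mul, Matrix.det_mul] at hd
    have hu2 : ((uElt p a₁ a₂ a₃ a₄ b₁ b₂).2).det ≠ 0 := by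
      rw [uElt, Matrix.det_diagonal]
      simp [Fin.prod_univ_two, pow_ne_zero, p_ne_zero (p := p)]
    rw [mul_comm k.2.det] at hd
    exact mul_left_cancel₀ hu2 hd
  have he : ∀ i j : Fin 4,
      (![(p : ℚ_[p]) ^ a₁, (p : ℚ_[p]) ^ a₂, (p : ℚ_[p]) ^ a₃, (p : ℚ_[p]) ^ a₄] i) * s.1 i j
        = k.1 i j * (![(p : ℚ_[p]) ^ a₁, (p : ℚ_[p]) ^ a₂, (p : ℚ_[p]) ^ a₃, (p : ℚ_[p]) ^ a₄] j) := by
    intro i j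
    have := congrFun (congrFun h1 i) j
    rwa [uElt, Matrix.diagonal_mul, Matrix.mul_diagonal] at this
  refine ⟨hs, ?_, ?_, ?_, ?_, ?_, ?_⟩
  · show ‖s.2.det - 1‖ ≤ _
    rw [hdet]; exact hkm
  · exact entry_key h12 (by simpa using he 1 0) hk10
  · exact entry_key (h23.trans h12) (by simpa using he 2 0) hk20
  · exact entry_key ((h34.trans h23).trans h12) (by simpa using he 3 0) hk30
  · exact entry_key (h34.trans h23) (by simpa using he 3 1) hk31
  · exact entry_key h34 (by simpa using he 3 2) hk32

section cosets
variable {M : Type*} [Monoid M] {S : Set M}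
  (hm : ∀ a ∈ S, ∀ b ∈ S, a * b ∈ S)
  (hi : ∀ a ∈ S, ∃ b ∈ S, a * b = 1 ∧ b * a = 1)

include hm hi in
lemma coset_self {s : M} (hs : s ∈ S) : ({s} : Set M) * S = S := by
  apply subset_antisymm
  · rintro x hx
    rw [Set.mem_mul] at hx
    obtain ⟨a, ha, b, hb, rfl⟩ := hx
    simp only [Set.mem_singleton_iff] at ha; subst ha
    exact hm _ hs _ hb
  · intro x hx
    obtain ⟨t, ht, hst, hts⟩ := hi s hs
    rw [Set.mem_mul]
    exact ⟨s, rfl, t * x, hm _ ht _ hx, by rw [← mul_assoc, hst, one_mul]⟩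

include hm hi in
lemma coset_eq_iff (h1 : (1:M) ∈ S) {g g' : M} :
    ({g} : Set M) * S = ({g'} : Set M) * S ↔ ∃ s ∈ S, g = g' * s := by
  constructor
  · intro h
    have : g ∈ ({g} : Set M) * S := ⟨g, rfl, 1, h1, mul_one g⟩
    rw [h, Set.mem_mul] at this
    obtain ⟨a, ha, b, hb, hab⟩ := this
    simp only [Set.mem_singleton_iff] at ha; subst ha
    exact ⟨b, hb, hab.symm⟩
  · rintro ⟨s, hs, rfl⟩
    rw [← Set.singleton_mul_singleton, mul_assoc, coset_self hm hi hs]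
end cosets

variable (p) in
lemma KG_eq (m n : ℕ) : Kmn p m n * GZ p = GZ p := by
  apply subset_antisymm
  · rw [Set.mul_subset_iff]
    intro a ha b hb
    exact mul_mem_GZ (Kmn_subset_GZ m n ha) hb
  · intro x hx
    exact ⟨1, one_mem_Kmn m n, x, hx, one_mul x⟩

lemma main_iff {m n a₁ a₂ a₃ a₄ b₁ b₂ : ℕ}
    (h12 : a₂ ≤ a₁) (h23 : a₃ ≤ a₂) (h34 : a₄ ≤ a₃)
    {k₁ k₂ : MG p} (hk₁ : k₁ ∈ Kmn p m n) (hk₂ : k₂ ∈ Kmn p m n) :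
    ({k₁ * uElt p a₁ a₂ a₃ a₄ b₁ b₂} : Set (MG p)) * GZ p
        = ({k₂ * uElt p a₁ a₂ a₃ a₄ b₁ b₂} : Set (MG p)) * GZ p ↔
      ({k₁ * uElt p a₁ a₂ a₃ a₄ b₁ b₂} : Set (MG p)) * Kmn p m n
        = ({k₂ * uElt p a₁ a₂ a₃ a₄ b₁ b₂} : Set (MG p)) * Kmn p m n := by
  have hGm : ∀ a ∈ GZ p, ∀ b ∈ GZ p, a * b ∈ GZ p := fun a ha b hb => mul_mem_GZ ha hb
  have hGi : ∀ a ∈ GZ p, ∃ b ∈ GZ p, a * b = 1 ∧ b * a = 1 := fun a ha => inv_pair_GZ ha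
  have hKm : ∀ a ∈ Kmn p m n, ∀ b ∈ Kmn p m n, a * b ∈ Kmn p m n :=
    fun a ha b hb => mul_mem_Kmn ha hb
  have hKi : ∀ a ∈ Kmn p m n, ∃ b ∈ Kmn p m n, a * b = 1 ∧ b * a = 1 :=
    fun a ha => inv_pair_Kmn ha
  rw [coset_eq_iff hGm hGi one_mem_GZ, coset_eq_iff hKm hKi (one_mem_Kmn m n)]
  constructor
  · rintro ⟨s, hs, hes⟩
    obtain ⟨k₂', hk₂', hki, hki'⟩ := inv_pair_Kmn hk₂
    have hcomm : uElt p a₁ a₂ a₃ a₄ b₁ b₂ * s = (k₂' * k₁) * uElt p a₁ a₂ a₃ a₄ b₁ b₂ := by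
      rw [mul_assoc, hes, ← mul_assoc, ← mul_assoc, hki', one_mul]
    exact ⟨s, key_conj h12 h23 h34 (mul_mem_Kmn hk₂' hk₁) hs hcomm, hes⟩
  · rintro ⟨s, hs, hes⟩
    exact ⟨s, Kmn_subset_GZ m n hs, hes⟩

/-- The canonical map `g·K_{m,n} ↦ g·G(ℤ_ℓ)` is a bijection from the left `K_{m,n}`-cosets
contained in `K_{m,n}·u·K_{m,n}` to the left `G(ℤ_ℓ)`-cosets contained in
`K_{m,n}·u·G(ℤ_ℓ)`; in particular, for `k₁, k₂ ∈ K_{m,n}` one has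
`k₁·u·G(ℤ_ℓ) = k₂·u·G(ℤ_ℓ)` iff `k₁·u·K_{m,n} = k₂·u·K_{m,n}`. -/
theorem stmt12 (p : ℕ) [Fact p.Prime] (m n : ℕ) (a₁ a₂ a₃ a₄ b₁ b₂ : ℕ)
    (h12 : a₂ ≤ a₁) (h23 : a₃ ≤ a₂) (h34 : a₄ ≤ a₃)
    (hsum1 : a₁ + a₄ = a₂ + a₃) (hsum2 : a₂ + a₃ = b₁ + b₂) :
    Set.BijOn (fun C : Set (MG p) => C * GZ p)
      {C : Set (MG p) | ∃ g ∈ Kmn p m n * {uElt p a₁ a₂ a₃ a₄ b₁ b₂} * Kmn p m n,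
        C = ({g} : Set (MG p)) * Kmn p m n}
      {D : Set (MG p) | ∃ g ∈ Kmn p m n * {uElt p a₁ a₂ a₃ a₄ b₁ b₂} * GZ p,
        D = ({g} : Set (MG p)) * GZ p} ∧
    ∀ k₁ ∈ Kmn p m n, ∀ k₂ ∈ Kmn p m n,
      (({k₁} : Set (MG p)) * {uElt p a₁ a₂ a₃ a₄ b₁ b₂} * GZ p =
          ({k₂} : Set (MG p)) * {uElt p a₁ a₂ a₃ a₄ b₁ b₂} * GZ p ↔
        ({k₁} : Set (MG p)) * {uElt p a₁ a₂ a₃ a₄ b₁ b₂} * Kmn p m n =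
          ({k₂} : Set (MG p)) * {uElt p a₁ a₂ a₃ a₄ b₁ b₂} * Kmn p m n) := by
  have hKm : ∀ a ∈ Kmn p m n, ∀ b ∈ Kmn p m n, a * b ∈ Kmn p m n :=
    fun a ha b hb => mul_mem_Kmn ha hb
  have hKi : ∀ a ∈ Kmn p m n, ∃ b ∈ Kmn p m n, a * b = 1 ∧ b * a = 1 :=
    fun a ha => inv_pair_Kmn ha
  have hGm : ∀ a ∈ GZ p, ∀ b ∈ GZ p, a * b ∈ GZ p := fun a ha b hb => mul_mem_GZ ha hb
  have hGi : ∀ a ∈ GZ p, ∃ b ∈ GZ p, a * b = 1 ∧ b * a = 1 := fun a ha => inv_pair_GZ ha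
  set u := uElt p a₁ a₂ a₃ a₄ b₁ b₂ with hu
  constructor
  · refine ⟨?_, ?_, ?_⟩
    · -- MapsTo
      rintro C ⟨g, hg, rfl⟩
      refine ⟨g, Set.mul_subset_mul_left (Kmn_subset_GZ m n) hg, ?_⟩
      show ({g} : Set (MG p)) * Kmn p m n * GZ p = {g} * GZ p
      rw [mul_assoc, KG_eq]
    · -- InjOn
      rintro C₁ ⟨g₁, hg₁, rfl⟩ C₂ ⟨g₂, hg₂, rfl⟩ heq
      obtain ⟨a₁', ha₁', κ₁, hκ₁, rfl⟩ := hg₁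
      obtain ⟨k₁, hk₁, u₁, hu₁, rfl⟩ := ha₁'
      obtain ⟨a₂', ha₂', κ₂, hκ₂, rfl⟩ := hg₂
      obtain ⟨k₂, hk₂, u₂, hu₂, rfl⟩ := ha₂'
      rw [Set.mem_singleton_iff] at hu₁ hu₂
      subst hu₁; subst hu₂
      have e₁K : ({k₁ * u * κ₁} : Set (MG p)) * Kmn p m n = {k₁ * u} * Kmn p m n :=
        (coset_eq_iff hKm hKi (one_mem_Kmn m n)).2 ⟨κ₁, hκ₁, rfl⟩
      have e₂K : ({k₂ * u * κ₂} : Set (MG p)) * Kmn p m n = {k₂ * u} * Kmn p m n :=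
        (coset_eq_iff hKm hKi (one_mem_Kmn m n)).2 ⟨κ₂, hκ₂, rfl⟩
      have e₁G : ({k₁ * u * κ₁} : Set (MG p)) * GZ p = {k₁ * u} * GZ p :=
        (coset_eq_iff hGm hGi one_mem_GZ).2 ⟨κ₁, Kmn_subset_GZ m n hκ₁, rfl⟩
      have e₂G : ({k₂ * u * κ₂} : Set (MG p)) * GZ p = {k₂ * u} * GZ p :=
        (coset_eq_iff hGm hGi one_mem_GZ).2 ⟨κ₂, Kmn_subset_GZ m n hκ₂, rfl⟩
      have heq' : ({k₁ * u} : Set (MG p)) * GZ p = {k₂ * u} * GZ p := by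
        rw [← e₁G, ← e₂G]
        have t1 : ({k₁ * u * κ₁} : Set (MG p)) * Kmn p m n * GZ p
            = {k₁ * u * κ₁} * GZ p := by rw [mul_assoc, KG_eq]
        have t2 : ({k₂ * u * κ₂} : Set (MG p)) * Kmn p m n * GZ p
            = {k₂ * u * κ₂} * GZ p := by rw [mul_assoc, KG_eq]
        rw [← t1, ← t2]
        exact heq
      rw [e₁K, e₂K]
      exact (main_iff h12 h23 h34 hk₁ hk₂).1 heq'
    · -- SurjOn
      rintro D ⟨g, hg, rfl⟩
      obtain ⟨a', ha', h, hh, rfl⟩ := hg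
      obtain ⟨k, hk, u', hu', rfl⟩ := ha'
      rw [Set.mem_singleton_iff] at hu'
      subst hu'
      refine ⟨({k * u} : Set (MG p)) * Kmn p m n,
        ⟨k * u, ⟨k * u, ⟨k, hk, u, rfl, rfl⟩, 1, one_mem_Kmn m n, mul_one _⟩, rfl⟩, ?_⟩
      show ({k * u} : Set (MG p)) * Kmn p m n * GZ p = {k * u * h} * GZ p
      rw [mul_assoc, KG_eq]
      exact ((coset_eq_iff hGm hGi one_mem_GZ).2 ⟨h, hh, rfl⟩).symm
  · intro k₁ hk₁ k₂ hk₂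
    rw [Set.singleton_mul_singleton, Set.singleton_mul_singleton]
    exact main_iff h12 h23 h34 hk₁ hk₂
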